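/- Let (X,Fₙ,*) be a generalized fuzzy n-metric space. Then for all x,y ∈ X and t > 0, Fₙ(x,y,y,…,y,t) ≥ [Fₙ(y,x,x,…,x, t/(n−1))]^{n−1}, where the power denotes the (n−1)-fold *-product when * is the product t-norm. -/

import Mathlib

/-- A generalized fuzzy `n`-metric space structure (Khan), in the sense of
George and Veeramani: `star` is a continuous t-norm and `F` is a fuzzy set on
`Xⁿ × (0,∞)` satisfying axioms (M1)–(M6). -/
structure IsGenFuzzyNMetric {X : Type*} (n : ℕ) (hn : 3 ≤ n)
    (star : ℝ → ℝ → ℝ) (F : (Fin n → X) → ℝ → ℝ) : Prop where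
  /-- `F` takes values in `[0,1]` -/
  mem : ∀ (x : Fin n → X) (t : ℝ), 0 < t → F x t ∈ Set.Icc (0:ℝ) 1
  /-- (M1) `F(x₁,…,x₁,x₂,t) > 0` for `x₁ ≠ x₂` -/
  pos : ∀ (x y : X) (t : ℝ), 0 < t → x ≠ y →
    0 < F (fun i => if i.val = n - 1 then y else x) t
  /-- (M2) `F(x₁,…,x₁,x₂,t) ≥ F(x₁,…,xₙ,t)` when at least two of `x₂,…,xₙ` are distinct -/
  ge : ∀ (x : Fin n → X) (t : ℝ), 0 < t →
    (∃ i j : Fin n, i ≠ ⟨0, by omega⟩ ∧ j ≠ ⟨0, by omega⟩ ∧ x i ≠ x j) →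
    F x t ≤ F (fun i => if i.val = n - 1 then x ⟨1, by omega⟩ else x ⟨0, by omega⟩) t
  /-- (M3) `F(x₁,…,xₙ,t) = 1` iff all the points coincide -/
  eq_one_iff : ∀ (x : Fin n → X) (t : ℝ), 0 < t → (F x t = 1 ↔ ∀ i j, x i = x j)
  /-- (M4) permutation invariance -/
  perm : ∀ (x : Fin n → X) (σ : Equiv.Perm (Fin n)) (t : ℝ), 0 < t → F (x ∘ σ) t = F x t
  /-- (M5) `F(x₁,a,…,a,t) * F(a,x₂,…,xₙ,s) ≤ F(x₁,…,xₙ,t+s)` -/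
  tri : ∀ (x : Fin n → X) (a : X) (t s : ℝ), 0 < t → 0 < s →
    star (F (fun i => if i.val = 0 then x ⟨0, by omega⟩ else a) t)
         (F (Function.update x ⟨0, by omega⟩ a) s) ≤ F x (t + s)
  /-- (M6) continuity in `t` on `(0,∞)` -/
  cont : ∀ x : Fin n → X, ContinuousOn (F x) (Set.Ioi 0)

def shiftPerm (n k : ℕ) (hk : k < n) : Equiv.Perm (Fin n) where
  toFun j := if h : j.val < k then ⟨j.val + 1, by omega⟩ else if j.val = k then ⟨0, by omega⟩ else j
  invFun j := if j.val = 0 then ⟨k, hk⟩ else if h : j.val ≤ k then ⟨j.val - 1, by omega⟩ else j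
  left_inv := by
    intro j
    apply Fin.ext
    dsimp only
    split_ifs <;> (simp only [Fin.val_mk] at *) <;> first | omega | simp_all
  right_inv := by
    intro j
    apply Fin.ext
    dsimp only
    split_ifs <;> (simp only [Fin.val_mk] at *) <;> first | omega | simp_all

theorem shiftPerm_apply_lt (n k : ℕ) (hk : k < n) (j : Fin n) (h : j.val < k) :
    shiftPerm n k hk j = ⟨j.val + 1, by omega⟩ := by
  simp only [shiftPerm, Equiv.coe_fn_mk, dif_pos h]

theorem shiftPerm_apply_eq (n k : ℕ) (hk : k < n) (j : Fin n) (h : j.val = k) :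
    shiftPerm n k hk j = ⟨0, by omega⟩ := by
  simp only [shiftPerm, Equiv.coe_fn_mk]
  rw [dif_neg (by omega), if_pos h]

theorem shiftPerm_apply_gt (n k : ℕ) (hk : k < n) (j : Fin n) (h : k < j.val) :
    shiftPerm n k hk j = j := by
  simp only [shiftPerm, Equiv.coe_fn_mk]
  rw [dif_neg (by omega), if_neg (by omega)]

/-- in a generalized fuzzy `n`-metric space with the product t-norm,
`Fₙ(x,y,…,y,t) ≥ [Fₙ(y,x,…,x,t/(n−1))]^{n−1}`. -/
theorem stmt4 {X : Type*} (n : ℕ) (hn : 3 ≤ n) (F : (Fin n → X) → ℝ → ℝ)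
    (hF : IsGenFuzzyNMetric n hn (fun a b => a * b) F)
    (x y : X) (t : ℝ) (ht : 0 < t) :
    (F (fun i => if i.val = 0 then y else x) (t / ((n : ℝ) - 1))) ^ (n - 1)
      ≤ F (fun i => if i.val = 0 then x else y) t := by
  have hn3 : (3:ℝ) ≤ (n:ℝ) := by exact_mod_cast hn
  set s : ℝ := t / ((n : ℝ) - 1) with hs_def
  have hspos : 0 < s := div_pos ht (by linarith)
  set Y : Fin n → X := fun i => if i.val = 0 then y else x with hY
  -- the vector with k copies of y followed by x's
  set v : ℕ → Fin n → X := fun k i => if i.val < k then y else x with hv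
  have key : ∀ k, 1 ≤ k → k ≤ n - 1 → (F Y s) ^ k ≤ F (v k) ((k : ℝ) * s) := by
    intro k hk1
    induction k, hk1 using Nat.le_induction with
    | base =>
      intro _
      have hv1 : v 1 = Y := by
        funext i
        simp [hv, hY, Nat.lt_one_iff]
      rw [pow_one, hv1, Nat.cast_one, one_mul]
    | succ k hk ih =>
      intro hk2
      have hkn : k < n := by omega
      have hkpos : (0:ℝ) < (k:ℝ) := by exact_mod_cast Nat.pos_of_ne_zero (by omega)
      have hks : (0:ℝ) < (k:ℝ) * s := mul_pos hkpos hspos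
      have tri := hF.tri (v (k+1)) x s ((k:ℝ) * s) hspos hks
      have h1 : (fun i : Fin n => if i.val = 0 then (v (k+1)) ⟨0, by omega⟩ else x) = Y := by
        funext i
        by_cases h : i.val = 0 <;> simp [hv, hY, h]
      have h2 : F (Function.update (v (k+1)) ⟨0, by omega⟩ x) ((k:ℝ)*s) = F (v k) ((k:ℝ)*s) := by
        rw [← hF.perm (Function.update (v (k+1)) ⟨0, by omega⟩ x) (shiftPerm n k hkn) ((k:ℝ)*s) hks]
        congr 1
        funext j
        show Function.update (v (k+1)) ⟨0, by omega⟩ x (shiftPerm n k hkn j) = v k j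
        rcases lt_trichotomy j.val k with h | h | h
        · rw [shiftPerm_apply_lt n k hkn j h]
          rw [Function.update_of_ne (by simp [Fin.ext_iff])]
          simp only [hv]
          rw [if_pos (by simp; omega), if_pos h]
        · rw [shiftPerm_apply_eq n k hkn j h]
          rw [Function.update_self]
          simp only [hv]
          rw [if_neg (by omega)]
        · rw [shiftPerm_apply_gt n k hkn j h]
          rw [Function.update_of_ne (by simp [Fin.ext_iff]; omega)]
          simp only [hv]
          rw [if_neg (by omega), if_neg (by omega)]
      rw [h1, h2] at tri
      have hFY0 : 0 ≤ F Y s := (hF.mem Y s hspos).1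
      calc (F Y s) ^ (k+1) = F Y s * (F Y s) ^ k := by ring
        _ ≤ F Y s * F (v k) ((k:ℝ)*s) :=
            mul_le_mul_of_nonneg_left (ih (by omega)) hFY0
        _ ≤ F (v (k+1)) (s + (k:ℝ)*s) := tri
        _ = F (v (k+1)) (((k:ℕ)+1 : ℝ) * s) := by congr 1; ring
        _ = F (v (k+1)) ((((k+1):ℕ) : ℝ) * s) := by push_cast; ring_nf
  have hkey := key (n-1) (by omega) le_rfl
  have hcast : (((n-1 : ℕ)) : ℝ) = (n:ℝ) - 1 := by
    push_cast [Nat.cast_sub (by omega : 1 ≤ n)]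
    ring
  have hts : (((n-1 : ℕ)) : ℝ) * s = t := by
    rw [hcast, hs_def]
    field_simp
    exact div_self (by linarith : (n:ℝ) - 1 ≠ 0)
  rw [hts] at hkey
  have hperm : F (v (n-1)) t = F (fun i : Fin n => if i.val = 0 then x else y) t := by
    rw [← hF.perm (fun i : Fin n => if i.val = 0 then x else y) (shiftPerm n (n-1) (by omega)) t ht]
    congr 1
    funext j
    show v (n-1) j = (fun i : Fin n => if i.val = 0 then x else y) (shiftPerm n (n-1) (by omega) j)
    rcases lt_or_ge j.val (n-1) with h | h
    · rw [shiftPerm_apply_lt n (n-1) (by omega) j h]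
      simp only [hv]
      rw [if_pos h]
      simp
    · have h' : j.val = n-1 := by omega
      rw [shiftPerm_apply_eq n (n-1) (by omega) j h']
      simp only [hv]
      rw [if_neg (by omega)]
      simp
  rw [hperm] at hkey
  exact hkey
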